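/- Let n ≥ 1 and m = n − 1. The map φ : Matrix (Fin n) (Fin m) ℂ → Herm(n)/ℝ·I, φ(X) = X X* + ℝ·I, is surjective, and its fibres coincide exactly with the orbits of the right action of U(m) given by X ↦ X C⁻¹: that is, φ(X) = φ(Y) if and only if Y = X C for some C ∈ U(m). -/

import Mathlib

open Matrix
open scoped ComplexOrder

/-- The real vector space of complex Hermitian (self-adjoint) `n × n` matrices,
as a real submodule of the matrix space. -/
noncomputable abbrev HermSub (n : ℕ) : Submodule ℝ (Matrix (Fin n) (Fin n) ℂ) :=
  selfAdjoint.submodule ℝ (Matrix (Fin n) (Fin n) ℂ)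

lemma one_mem_hermSub (n : ℕ) : (1 : Matrix (Fin n) (Fin n) ℂ) ∈ HermSub n :=
  IsSelfAdjoint.one _

lemma mulH_mem_hermSub {n m : ℕ} (X : Matrix (Fin n) (Fin m) ℂ) : X * Xᴴ ∈ HermSub n :=
  Matrix.isHermitian_mul_conjTranspose_self X

lemma conj_mem_hermSub {n : ℕ} (C : Matrix (Fin n) (Fin n) ℂ) (A : HermSub n) :
    C * (A : Matrix (Fin n) (Fin n) ℂ) * Cᴴ ∈ HermSub n :=
  Matrix.isHermitian_mul_mul_conjTranspose C (A.2 : (A : Matrix (Fin n) (Fin n) ℂ).IsHermitian)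

/-- The real line `ℝ·I` inside the space of Hermitian matrices. -/
noncomputable def lineI (n : ℕ) : Submodule ℝ (HermSub n) :=
  Submodule.span ℝ {(⟨1, one_mem_hermSub n⟩ : HermSub n)}

/-- The map `φ : X ↦ X X* + ℝ·I` on `n × (n-1)` complex matrices. -/
noncomputable def phi (n : ℕ) (X : Matrix (Fin n) (Fin (n - 1)) ℂ) :
    HermSub n ⧸ lineI n :=
  Submodule.Quotient.mk ⟨X * Xᴴ, mulH_mem_hermSub X⟩

section Aux

open scoped InnerProductSpace

lemma dot_aux {n m : ℕ} (X : Matrix (Fin n) (Fin m) ℂ) (v : Fin n → ℂ) :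
    star (Xᴴ *ᵥ v) ⬝ᵥ (Xᴴ *ᵥ v) = star v ⬝ᵥ (X * Xᴴ) *ᵥ v := by
  rw [← mulVec_mulVec, dotProduct_mulVec, star_mulVec, conjTranspose_conjTranspose,
    dotProduct_mulVec, dotProduct_mulVec]

lemma toEuclideanLin_mul {l p q : ℕ} (A : Matrix (Fin l) (Fin p) ℂ) (B : Matrix (Fin p) (Fin q) ℂ) :
    toEuclideanLin (A * B) = (toEuclideanLin A).comp (toEuclideanLin B) := by
  refine LinearMap.ext fun v => ?_
  simp [toEuclideanLin_apply, mulVec_mulVec]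

lemma toEuclideanLin_one {p : ℕ} :
    toEuclideanLin (1 : Matrix (Fin p) (Fin p) ℂ) = LinearMap.id := by
  refine LinearMap.ext fun v => ?_
  simp [toEuclideanLin_apply]

/-- If `X Xᴴ = Y Yᴴ` then `Y = X C` for some unitary `C`. -/
lemma exists_unitary_of_eq {n m : ℕ} (X Y : Matrix (Fin n) (Fin m) ℂ)
    (h : X * Xᴴ = Y * Yᴴ) :
    ∃ C : Matrix (Fin m) (Fin m) ℂ, C * Cᴴ = 1 ∧ Y = X * C := by
  classical
  set f : EuclideanSpace ℂ (Fin n) →ₗ[ℂ] EuclideanSpace ℂ (Fin m) := toEuclideanLin Xᴴ with hf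
  set g : EuclideanSpace ℂ (Fin n) →ₗ[ℂ] EuclideanSpace ℂ (Fin m) := toEuclideanLin Yᴴ with hg
  have hinner : ∀ v : EuclideanSpace ℂ (Fin n), (⟪f v, f v⟫_ℂ) = ⟪g v, g v⟫_ℂ := by
    intro v
    rw [hf, hg]
    rw [EuclideanSpace.inner_eq_star_dotProduct, EuclideanSpace.inner_eq_star_dotProduct]
    simp only [toEuclideanLin_apply, Equiv.apply_symm_apply]
    rw [dotProduct_comm, dot_aux, dotProduct_comm (Yᴴ *ᵥ _), dot_aux, h]
  have hnorm : ∀ v, ‖f v‖ = ‖g v‖ := by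
    intro v
    rw [@norm_eq_sqrt_re_inner ℂ, @norm_eq_sqrt_re_inner ℂ, hinner]
  have hker : LinearMap.ker f ≤ LinearMap.ker g := by
    intro v hv
    rw [LinearMap.mem_ker] at hv ⊢
    have := hinner v
    rw [hv, inner_zero_left] at this
    exact inner_self_eq_zero.mp this.symm
  set L0 : (EuclideanSpace ℂ (Fin n) ⧸ LinearMap.ker f) →ₗ[ℂ] EuclideanSpace ℂ (Fin m) :=
    (LinearMap.ker f).liftQ g hker with hL0
  set Lr : (LinearMap.range f) →ₗ[ℂ] EuclideanSpace ℂ (Fin m) :=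
    L0 ∘ₗ (f.quotKerEquivRange.symm : LinearMap.range f →ₗ[ℂ] _) with hLr
  have hLr_apply : ∀ v : EuclideanSpace ℂ (Fin n),
      Lr ⟨f v, LinearMap.mem_range_self f v⟩ = g v := by
    intro v
    rw [hLr]
    simp only [LinearMap.coe_comp, Function.comp_apply, LinearEquiv.coe_coe]
    rw [LinearMap.quotKerEquivRange_symm_apply_image, hL0]
    exact Submodule.liftQ_apply _ _ _
  set L : (LinearMap.range f) →ₗᵢ[ℂ] EuclideanSpace ℂ (Fin m) :=
    ⟨Lr, by
      rintro ⟨s, hs⟩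
      obtain ⟨v, rfl⟩ := hs
      have h1 : ‖(⟨f v, LinearMap.mem_range_self f v⟩ : LinearMap.range f)‖ = ‖f v‖ := rfl
      rw [h1, hLr_apply, hnorm]⟩ with hL
  set U := L.extend with hU
  set M : Matrix (Fin m) (Fin m) ℂ := toEuclideanLin.symm U.toLinearMap with hMdef
  have hM : toEuclideanLin M = U.toLinearMap := toEuclideanLin.apply_symm_apply _
  have hUf : ∀ v, U (f v) = g v := by
    intro v
    have : f v = ((⟨f v, LinearMap.mem_range_self f v⟩ : LinearMap.range f) :
        EuclideanSpace ℂ (Fin m)) := rfl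
    rw [this, LinearIsometry.extend_apply]
    exact hLr_apply v
  have hMM : Mᴴ * M = 1 := by
    apply toEuclideanLin.injective
    rw [toEuclideanLin_mul, toEuclideanLin_conjTranspose_eq_adjoint, hM, toEuclideanLin_one]
    refine LinearMap.ext fun x => ?_
    refine ext_inner_left ℂ fun y => ?_
    rw [LinearMap.comp_apply, LinearMap.adjoint_inner_right, LinearMap.id_apply]
    exact U.inner_map_map y x
  refine ⟨Mᴴ, by rw [conjTranspose_conjTranspose]; exact hMM, ?_⟩
  have hYH : Yᴴ = M * Xᴴ := by
    apply toEuclideanLin.injective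
    rw [toEuclideanLin_mul, hM, ← hg, ← hf]
    exact LinearMap.ext fun v => (hUf v).symm
  calc Y = Yᴴᴴ := (conjTranspose_conjTranspose Y).symm
    _ = (M * Xᴴ)ᴴ := by rw [hYH]
    _ = X * Mᴴ := by rw [conjTranspose_mul, conjTranspose_conjTranspose]

/-- An `n × m` matrix with `m < n` cannot satisfy `X Xᴴ = Y Yᴴ + r I` with `r > 0`. -/
lemma rank_aux {n m : ℕ} (hmn : m < n) (X Y : Matrix (Fin n) (Fin m) ℂ) (r : ℝ) (hr : 0 < r)
    (h : X * Xᴴ = Y * Yᴴ + (r : ℂ) • 1) : False := by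
  have hpd : (Y * Yᴴ + (r : ℂ) • (1 : Matrix (Fin n) (Fin n) ℂ)).PosDef := by
    refine Matrix.PosDef.posSemidef_add (posSemidef_self_mul_conjTranspose Y) ?_
    rw [smul_one_eq_diagonal]
    exact posDef_diagonal_iff.mpr fun _ => by positivity
  have h1 : (X * Xᴴ).rank = n := by
    rw [h, rank_of_isUnit _ hpd.isUnit, Fintype.card_fin]
  have h2 : (X * Xᴴ).rank ≤ m := by
    rw [rank_self_mul_conjTranspose]
    exact X.rank_le_width
  omega

/-- Surjectivity: every Hermitian matrix is `X Xᴴ` up to a real multiple of the identity. -/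
lemma surj_aux (m : ℕ) (A : Matrix (Fin (m+1)) (Fin (m+1)) ℂ) (hA : A.IsHermitian) :
    ∃ (X : Matrix (Fin (m+1)) (Fin m) ℂ) (r : ℝ),
      X * Xᴴ = A + r • (1 : Matrix (Fin (m+1)) (Fin (m+1)) ℂ) := by
  classical
  obtain ⟨i₀, -, hmin⟩ := Finset.exists_min_image Finset.univ hA.eigenvalues
    ⟨⟨0, Nat.succ_pos m⟩, Finset.mem_univ _⟩
  set V : Matrix (Fin (m+1)) (Fin (m+1)) ℂ :=
    ((hA.eigenvectorUnitary : Matrix (Fin (m+1)) (Fin (m+1)) ℂ)) with hV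
  set lam := hA.eigenvalues with hlam
  have hd : ∀ l, 0 ≤ lam l - lam i₀ := fun l => sub_nonneg.mpr (hmin l (Finset.mem_univ _))
  set X : Matrix (Fin (m+1)) (Fin m) ℂ :=
    fun i j => V i (i₀.succAbove j) * (Real.sqrt (lam (i₀.succAbove j) - lam i₀) : ℂ) with hX
  refine ⟨X, -(lam i₀), ?_⟩
  have step1 : X * Xᴴ = V * (diagonal (fun l => ((lam l - lam i₀ : ℝ) : ℂ)) * star V) := by
    ext i k
    rw [mul_apply, mul_apply]
    rw [Fin.sum_univ_succAbove
      (fun l => V i l * (diagonal (fun l => ((lam l - lam i₀ : ℝ) : ℂ)) * star V) l k) i₀]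
    have h0 : V i i₀ * ((diagonal (fun l => ((lam l - lam i₀ : ℝ) : ℂ)) * star V) i₀ k) = 0 := by
      simp [diagonal_mul]
    rw [h0, zero_add]
    refine Finset.sum_congr rfl fun j _ => ?_
    rw [conjTranspose_apply]
    simp only [hX, conjTranspose_apply, diagonal_mul, star_apply, star_mul', Complex.conj_ofReal]
    have hsq : ((lam (i₀.succAbove j) - lam i₀ : ℝ) : ℂ)
        = (Real.sqrt (lam (i₀.succAbove j) - lam i₀) : ℂ)
          * (Real.sqrt (lam (i₀.succAbove j) - lam i₀) : ℂ) := by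
      rw [← Complex.ofReal_mul, Real.mul_self_sqrt (hd _)]
    simp only [RCLike.star_def, Complex.conj_ofReal]
    rw [hsq]; ring
  have hone : (1 : Matrix (Fin (m+1)) (Fin (m+1)) ℂ) = V * star V :=
    (Matrix.mem_unitaryGroup_iff.mp hA.eigenvectorUnitary.2).symm
  have hsm : ∀ (r : ℝ) (M : Matrix (Fin (m+1)) (Fin (m+1)) ℂ), r • M = (r : ℂ) • M := by
    intro r M; ext i j; simp [Complex.real_smul]
  calc X * Xᴴ
      = V * (diagonal (fun l => ((lam l - lam i₀ : ℝ) : ℂ)) * star V) := step1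
    _ = V * ((diagonal (RCLike.ofReal ∘ lam) - ((lam i₀ : ℝ) : ℂ) • 1) * star V) := by
        congr 2
        rw [smul_one_eq_diagonal, diagonal_sub]
        congr with l
        push_cast
        rfl
    _ = V * diagonal (RCLike.ofReal ∘ lam) * star V
        - ((lam i₀ : ℝ) : ℂ) • (V * (1 * star V)) := by
        rw [Matrix.sub_mul, Matrix.mul_sub, Matrix.smul_mul, Matrix.mul_smul, one_mul,
          Matrix.mul_assoc]
    _ = A + (-(lam i₀)) • 1 := by
        have hs := hA.spectral_theorem
        rw [Unitary.conjStarAlgAut_apply] at hs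
        rw [← hs, one_mul, ← hone, hsm, sub_eq_add_neg, ← neg_smul]
        push_cast
        rfl

end Aux

/-- For `m = n - 1`, the map `φ(X) = X X* + ℝ·I` is surjective and its fibres coincide
with the orbits of the right action `X ↦ X C⁻¹` of `U(m)`. -/
theorem stmt15 (n : ℕ) (hn : 1 ≤ n) :
    Function.Surjective (phi n) ∧
    ∀ X Y : Matrix (Fin n) (Fin (n - 1)) ℂ,
      phi n X = phi n Y ↔
        ∃ C : Matrix (Fin (n - 1)) (Fin (n - 1)) ℂ, C * Cᴴ = 1 ∧ Y = X * C := by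
  obtain ⟨m, rfl⟩ : ∃ m, n = m + 1 := ⟨n - 1, (Nat.succ_pred_eq_of_pos hn).symm⟩
  constructor
  · intro q
    obtain ⟨A, rfl⟩ := Submodule.Quotient.mk_surjective _ q
    obtain ⟨X, r, hXA⟩ := surj_aux m A.1 A.2
    refine ⟨X, ?_⟩
    rw [phi, Submodule.Quotient.eq]
    have key : (⟨X * Xᴴ, mulH_mem_hermSub X⟩ : HermSub (m+1)) - A
        = r • (⟨1, one_mem_hermSub (m+1)⟩ : HermSub (m+1)) := by
      apply Subtype.ext
      push_cast
      rw [hXA]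
      abel
    rw [key, lineI]
    exact Submodule.smul_mem _ r (Submodule.mem_span_singleton_self _)
  · intro X Y
    constructor
    · intro h
      rw [phi, phi, Submodule.Quotient.eq, lineI] at h
      obtain ⟨r, hr⟩ := Submodule.mem_span_singleton.mp h
      have hr' : X * Xᴴ - Y * Yᴴ = (r : ℂ) • 1 := by
        have h2 := congrArg Subtype.val hr
        push_cast at h2
        rw [← h2]
        ext i j
        simp [Complex.real_smul]
      rcases lt_trichotomy r 0 with h0 | h0 | h0
      · exact (rank_aux (Nat.lt_succ_self m) Y X (-r) (by linarith) (by
          push_cast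
          rw [neg_smul, ← hr']
          abel)).elim
      · apply exists_unitary_of_eq
        subst h0
        push_cast at hr'
        rw [zero_smul, sub_eq_zero] at hr'
        exact hr'
      · exact (rank_aux (Nat.lt_succ_self m) X Y r h0 (by rw [← hr']; abel)).elim
    · rintro ⟨C, hC, rfl⟩
      rw [phi, phi]
      congr 1
      apply Subtype.ext
      show X * Xᴴ = (X * C) * (X * C)ᴴ
      rw [conjTranspose_mul, Matrix.mul_assoc, ← Matrix.mul_assoc C, hC, Matrix.one_mul]
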